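/- For a prime p and a digit κ with 1 ≤ κ ≤ p − 1, one has ∑_{u=0}^{p-2} ∑_{v=u+1}^{p-1} (v − u) e^{2πi κ(v−u)/p} = −p/(2 sin²(κπ/p)). -/

import Mathlib

open Finset

lemma myshift (p : ℕ) (F : ℕ → ℂ) :
    ∑ d ∈ range p, F (d + 1) = ∑ d ∈ range p, F d + F p - F 0 := by
  have h1 := Finset.sum_range_succ' F p
  have h2 := Finset.sum_range_succ F p
  linear_combination h2 - h1

lemma key_sum (p : ℕ) (z : ℂ) (hz1 : z ^ p = 1) (hz : z ≠ 1) :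
    ∑ d ∈ range p, ((p:ℂ) - d) * d * z ^ d = 2 * p * z / (1 - z) ^ 2 := by
  have hne : (1 : ℂ) - z ≠ 0 := sub_ne_zero.mpr (Ne.symm hz)
  have hA : ∑ d ∈ range p, z ^ d = 0 := by
    rw [geom_sum_eq hz, hz1, sub_self, zero_div]
  rw [eq_div_iff (pow_ne_zero 2 hne)]
  set F1 : ℕ → ℂ := fun e => ((p:ℂ) - ((e:ℂ)-1)) * ((e:ℂ)-1) * z^e with hF1
  set F2 : ℕ → ℂ := fun e => ((p:ℂ) - ((e:ℂ)-2)) * ((e:ℂ)-2) * z^e with hF2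
  have hzp1 : z ^ (p+1) = z := by rw [pow_succ, hz1, one_mul]
  have hS1 : ∑ d ∈ range p, ((p:ℂ) - d) * d * z ^ (d+1)
      = ∑ d ∈ range p, F1 d + ((p:ℂ)-1) + ((p:ℂ)+1) := by
    have h := myshift p F1
    have he : ∀ d ∈ range p, F1 (d+1) = ((p:ℂ) - d) * d * z ^ (d+1) := by
      intro d _; simp only [hF1]; push_cast; ring
    rw [Finset.sum_congr rfl he] at h
    rw [h]
    simp only [hF1]
    rw [hz1]
    push_cast
    ring
  have hS2 : ∑ d ∈ range p, ((p:ℂ) - d) * d * z ^ (d+2)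
      = ∑ d ∈ range p, F2 d + 2*((p:ℂ)-2) + 2*((p:ℂ)+2) + ((p:ℂ)-1)*z + ((p:ℂ)+1)*z := by
    have h1 := myshift p (fun e => F2 (e+1))
    have h2 := myshift p F2
    have he : ∀ d ∈ range p, F2 (d+1+1) = ((p:ℂ) - d) * d * z ^ (d+2) := by
      intro d _; simp only [hF2]; push_cast; ring
    rw [Finset.sum_congr rfl he] at h1
    rw [h1, h2]
    simp only [hF2]
    rw [hz1, hzp1]
    push_cast
    ring
  have hdiff : ∑ d ∈ range p, ((p:ℂ) - d) * d * z ^ d - 2 * ∑ d ∈ range p, F1 d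
      + ∑ d ∈ range p, F2 d = 0 := by
    rw [Finset.mul_sum, ← Finset.sum_sub_distrib, ← Finset.sum_add_distrib]
    calc _ = ∑ d ∈ range p, (-2 : ℂ) * z ^ d := by
          refine Finset.sum_congr rfl fun d _ => ?_
          simp only [hF1, hF2]; ring
      _ = 0 := by rw [← Finset.mul_sum, hA, mul_zero]
  have expand : (∑ d ∈ range p, ((p:ℂ) - d) * d * z ^ d) * (1 - z) ^ 2
      = ∑ d ∈ range p, ((p:ℂ) - d) * d * z ^ d
        - 2 * ∑ d ∈ range p, ((p:ℂ) - d) * d * z ^ (d+1)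
        + ∑ d ∈ range p, ((p:ℂ) - d) * d * z ^ (d+2) := by
    rw [Finset.sum_mul, Finset.mul_sum, ← Finset.sum_sub_distrib, ← Finset.sum_add_distrib]
    exact Finset.sum_congr rfl fun d _ => by ring
  rw [expand, hS1, hS2]
  linear_combination hdiff

lemma double_red (p : ℕ) (hp : 2 ≤ p) (F : ℕ → ℂ) (hF0 : F 0 = 0) :
    ∑ u ∈ range (p - 1), ∑ v ∈ Finset.Icc (u + 1) (p - 1), F (v - u)
      = ∑ d ∈ range p, (p - d : ℕ) • F d := by
  have step1 : ∀ u ∈ range (p-1), ∑ v ∈ Finset.Icc (u + 1) (p - 1), F (v - u)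
      = ∑ d ∈ Finset.Icc 1 (p - 1 - u), F d := by
    intro u hu
    simp only [Finset.mem_range] at hu
    have : Finset.Icc (u+1) (p-1) = Finset.map (addLeftEmbedding u) (Finset.Icc 1 (p-1-u)) := by
      rw [Finset.map_add_left_Icc]
      congr 1
      omega
    rw [this, Finset.sum_map]
    refine Finset.sum_congr rfl fun d _ => ?_
    simp [addLeftEmbedding_apply]
  rw [Finset.sum_congr rfl step1]
  have swap : ∑ u ∈ range (p-1), ∑ d ∈ Finset.Icc 1 (p - 1 - u), F d
      = ∑ d ∈ Finset.Icc 1 (p-1), ∑ u ∈ range (p - d), F d := by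
    refine Finset.sum_comm' ?_
    intro u d
    simp only [Finset.mem_range, Finset.mem_Icc]
    omega
  rw [swap]
  have inner : ∀ d ∈ Finset.Icc 1 (p-1), ∑ u ∈ range (p - d), F d = (p - d : ℕ) • F d := by
    intro d _
    rw [Finset.sum_const, Finset.card_range]
  rw [Finset.sum_congr rfl inner]
  apply Finset.sum_subset
  · intro d hd
    simp only [Finset.mem_range, Finset.mem_Icc] at hd ⊢
    omega
  · intro d hd hnd
    simp only [Finset.mem_range, Finset.mem_Icc] at hd hnd
    have : d = 0 := by omega
    subst this
    simp [hF0]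

theorem sum_weighted_char_upper (p : ℕ) (hp : p.Prime) (κ : ℕ) (hκ1 : 1 ≤ κ) (hκ2 : κ ≤ p - 1) :
    ∑ u ∈ Finset.range (p - 1), ∑ v ∈ Finset.Icc (u + 1) (p - 1),
        ((v : ℂ) - (u : ℂ)) * Complex.exp (2 * Real.pi * Complex.I * κ * ((v : ℂ) - u) / p)
      = -(p : ℂ) / (2 * (Real.sin (κ * Real.pi / p)) ^ 2) := by
  have hp2 : 2 ≤ p := hp.two_le
  have hκp : κ < p := by omega
  have hpne : (p : ℂ) ≠ 0 := Nat.cast_ne_zero.mpr (by omega)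
  set z : ℂ := Complex.exp (2 * Real.pi * Complex.I * κ / p) with hzdef
  have hz0 : z ≠ 0 := Complex.exp_ne_zero _
  have hz1 : z ^ p = 1 := by
    rw [hzdef, ← Complex.exp_nat_mul]
    have harg : (p : ℂ) * (2 * Real.pi * Complex.I * κ / p) = (κ : ℂ) * (2 * Real.pi * Complex.I) := by
      field_simp
    rw [harg]
    have := Complex.exp_int_mul_two_pi_mul_I (κ : ℤ)
    push_cast at this
    exact this
  have hzne : z ≠ 1 := by
    intro h
    rw [hzdef, Complex.exp_eq_one_iff] at h
    obtain ⟨n, hn⟩ := h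
    have hne2 : (2 * (Real.pi : ℂ) * Complex.I) ≠ 0 := by
      simp [Real.pi_ne_zero, Complex.I_ne_zero]
    have key : (2 * (Real.pi : ℂ) * Complex.I) * ((κ : ℂ) - n * p) = 0 := by
      field_simp at hn
      linear_combination (2 * (Real.pi : ℂ) * Complex.I) * hn
    have hκnp : (κ : ℂ) = n * p := by
      rcases mul_eq_zero.mp key with h' | h'
      · exact absurd h' hne2
      · exact sub_eq_zero.mp h'
    have hint : (κ : ℤ) = n * p := by exact_mod_cast hκnp
    have hdvd : (p : ℤ) ∣ (κ : ℤ) := ⟨n, by linarith⟩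
    have : p ∣ κ := Int.natCast_dvd_natCast.mp hdvd
    have := Nat.le_of_dvd (by omega) this
    omega
  -- reduce double sum
  have hterm : ∀ u ∈ range (p-1), ∀ v ∈ Finset.Icc (u+1) (p-1),
      ((v : ℂ) - (u : ℂ)) * Complex.exp (2 * Real.pi * Complex.I * κ * ((v : ℂ) - u) / p)
        = ((v - u : ℕ) : ℂ) * z ^ (v - u) := by
    intro u hu v hv
    simp only [Finset.mem_Icc] at hv
    have huv : u ≤ v := by omega
    have hcast : ((v - u : ℕ) : ℂ) = (v : ℂ) - u := by
      push_cast [Nat.cast_sub huv]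
      ring
    rw [hcast, hzdef, ← Complex.exp_nat_mul]
    congr 2
    rw [hcast]
    ring
  rw [Finset.sum_congr rfl fun u hu => Finset.sum_congr rfl (hterm u hu)]
  rw [double_red p hp2 (fun d => (d : ℂ) * z ^ d) (by simp)]
  have hred : ∑ d ∈ range p, (p - d : ℕ) • ((d : ℂ) * z ^ d)
      = ∑ d ∈ range p, ((p:ℂ) - d) * d * z ^ d := by
    refine Finset.sum_congr rfl fun d hd => ?_
    simp only [Finset.mem_range] at hd
    rw [nsmul_eq_mul, Nat.cast_sub hd.le]
    ring
  rw [hred, key_sum p z hz1 hzne]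
  -- now the RHS identity
  set s : ℝ := Real.sin (κ * Real.pi / p) with hsdef
  have hκpR : (κ : ℝ) < p := by exact_mod_cast hκp
  have hppos : (0:ℝ) < p := by positivity
  have hs : 0 < s := by
    apply Real.sin_pos_of_pos_of_lt_pi
    · positivity
    · rw [div_lt_iff₀ hppos]
      nlinarith [Real.pi_pos]
  have hsne : (s : ℂ) ≠ 0 := Complex.ofReal_ne_zero.mpr hs.ne'
  set φ : ℂ := (κ : ℂ) * Real.pi / p with hφdef
  have hw : z = Complex.exp (φ * Complex.I) ^ 2 := by
    rw [hzdef, ← Complex.exp_nat_mul]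
    congr 1
    rw [hφdef]
    push_cast
    ring
  have hsC : (s : ℂ) = Complex.sin φ := by
    rw [hsdef, Complex.ofReal_sin]
    congr 1
    push_cast
    ring
  have hsq : (1 - z)^2 = -4 * (s:ℂ)^2 * z := by
    rw [hw, hsC, Complex.exp_mul_I]
    linear_combination (-(1 - Complex.cos φ^2 + 3*Complex.sin φ^2
      - 4*Complex.cos φ*Complex.sin φ*Complex.I)) * Complex.sin_sq_add_cos_sq φ
      + (4*Complex.cos φ*Complex.sin φ^3*Complex.I + 6*Complex.cos φ^2*Complex.sin φ^2
        - 2*Complex.sin φ^2 + Complex.sin φ^4*(Complex.I^2+3)) * Complex.I_sq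
  rw [hsq]
  field_simp
  ring
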